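/- The bilinear form ( , ) on V is non-degenerate and U_q(G_2)-invariant; concretely, for i = 1, 2 and all v, w in V: (pi(E_i) v, pi(K_i) w) + (v, pi(E_i) w) = 0; (pi(F_i) v, w) + (pi(K_i)^{-1} v, pi(F_i) w) = 0; and (pi(K_i) v, pi(K_i) w) = (v, w). -/

import Mathlib

set_option synthInstance.maxHeartbeats 400000
set_option maxHeartbeats 1000000

noncomputable section

open scoped TensorProduct BigOperators

/-- The base field `K = ℂ(q)`, the field of rational functions over `ℂ`. -/
abbrev K : Type := RatFunc ℂ

/-- The indeterminate `q ∈ ℂ(q)`. -/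
noncomputable def q : K := RatFunc.X

/-- Index set `{1,2,3,0,-3,-2,-1}` for the basis of the 7-dimensional module `V`. -/
inductive Idx : Type
  | p1 | p2 | p3 | z | m3 | m2 | m1
  deriving DecidableEq

instance : Fintype Idx :=
  ⟨{Idx.p1, Idx.p2, Idx.p3, Idx.z, Idx.m3, Idx.m2, Idx.m1}, fun x => by cases x <;> simp⟩

open Idx

/-- The standard 7-dimensional module `V = K⁷`. -/
abbrev V : Type := Idx → K

/-- The basis vectors `v_a` of `V`. -/
noncomputable def v (a : Idx) : V := Pi.single a 1

/-- Matrix units `E_{ab}` with `E_{ab} v_c = δ_{bc} v_a`. -/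
noncomputable def Emat (a b : Idx) : Matrix Idx Idx K := Matrix.single a b 1

/-- The operator `π(E₁)` on `V`. -/
noncomputable def piE1 : Module.End K V :=
  Matrix.toLin' (Emat p1 p2 + (q + q⁻¹) • Emat p3 z - (q + q⁻¹) • Emat z m3 - Emat m2 m1)

/-- The operator `π(E₂)` on `V`. -/
noncomputable def piE2 : Module.End K V := Matrix.toLin' (Emat p2 p3 - Emat m3 m2)

/-- The operator `π(F₁)` on `V`. -/
noncomputable def piF1 : Module.End K V :=
  Matrix.toLin' (Emat p2 p1 + Emat z p3 - Emat m3 z - Emat m1 m2)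

/-- The operator `π(F₂)` on `V`. -/
noncomputable def piF2 : Module.End K V := Matrix.toLin' (Emat p3 p2 - Emat m2 m3)

/-- The operator `π(K₁)` on `V`. -/
noncomputable def piK1 : Module.End K V :=
  Matrix.toLin' (q • Emat p1 p1 + q⁻¹ • Emat p2 p2 + q ^ 2 • Emat p3 p3 + Emat z z
    + q ^ (-2 : ℤ) • Emat m3 m3 + q • Emat m2 m2 + q⁻¹ • Emat m1 m1)

/-- The inverse operator `π(K₁)⁻¹` on `V`. -/
noncomputable def piK1inv : Module.End K V :=
  Matrix.toLin' (q⁻¹ • Emat p1 p1 + q • Emat p2 p2 + q ^ (-2 : ℤ) • Emat p3 p3 + Emat z z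
    + q ^ 2 • Emat m3 m3 + q⁻¹ • Emat m2 m2 + q • Emat m1 m1)

/-- The operator `π(K₂)` on `V`. -/
noncomputable def piK2 : Module.End K V :=
  Matrix.toLin' (Emat p1 p1 + q ^ 3 • Emat p2 p2 + q ^ (-3 : ℤ) • Emat p3 p3 + Emat z z
    + q ^ 3 • Emat m3 m3 + q ^ (-3 : ℤ) • Emat m2 m2 + Emat m1 m1)

/-- The inverse operator `π(K₂)⁻¹` on `V`. -/
noncomputable def piK2inv : Module.End K V :=
  Matrix.toLin' (Emat p1 p1 + q ^ (-3 : ℤ) • Emat p2 p2 + q ^ 3 • Emat p3 p3 + Emat z z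
    + q ^ (-3 : ℤ) • Emat m3 m3 + q ^ 3 • Emat m2 m2 + Emat m1 m1)

/-- The coefficient table `φ_{ab} = (v_a, v_b)` of the invariant bilinear form on `V`. -/
noncomputable def phi : Idx → Idx → K
  | p1, m1 => q ^ 6
  | p2, m2 => q ^ 5
  | p3, m3 => q ^ 2
  | z, z => 1
  | m1, p1 => q ^ (-4 : ℤ)
  | m2, p2 => q ^ (-3 : ℤ)
  | m3, p3 => 1
  | _, _ => 0

/-- The bilinear form `( , )` on `V`, with `(v_a, v_b) = φ_{ab}`. -/
noncomputable def B (u w : V) : K := ∑ a : Idx, ∑ b : Idx, u a * w b * phi a b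


lemma hq : q ≠ 0 := RatFunc.X_ne_zero

lemma sum_idx (f : Idx → K) : ∑ a, f a = f p1 + f p2 + f p3 + f z + f m3 + f m2 + f m1 := by
  show Finset.sum _ f = _
  rw [show (Finset.univ : Finset Idx) = {p1,p2,p3,z,m3,m2,m1} from rfl]
  simp [Finset.sum_insert]; ring

lemma B_expand (u w : V) : B u w = u p1 * w m1 * q^6 + u p2 * w m2 * q^5
    + u p3 * w m3 * q^2 + u z * w z + u m1 * w p1 * (q⁻¹)^4 + u m2 * w p2 * (q⁻¹)^3
    + u m3 * w p3 := by
  simp only [B, sum_idx, phi, zpow_neg, zpow_ofNat, inv_pow]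
  ring

noncomputable def E1f (u : V) : V
  | p1 => u p2
  | p3 => (q+q⁻¹) * u z
  | z => -((q+q⁻¹) * u m3)
  | m2 => -(u m1)
  | _ => 0

noncomputable def E2f (u : V) : V
  | p2 => u p3
  | m3 => -(u m2)
  | _ => 0

noncomputable def F1f (u : V) : V
  | p2 => u p1
  | z => u p3
  | m3 => -(u z)
  | m1 => -(u m2)
  | _ => 0

noncomputable def F2f (u : V) : V
  | p3 => u p2
  | m2 => -(u m3)
  | _ => 0

noncomputable def K1f (u : V) : V
  | p1 => q * u p1
  | p2 => q⁻¹ * u p2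
  | p3 => q^2 * u p3
  | z => u z
  | m3 => (q⁻¹)^2 * u m3
  | m2 => q * u m2
  | m1 => q⁻¹ * u m1

noncomputable def K1if (u : V) : V
  | p1 => q⁻¹ * u p1
  | p2 => q * u p2
  | p3 => (q⁻¹)^2 * u p3
  | z => u z
  | m3 => q^2 * u m3
  | m2 => q⁻¹ * u m2
  | m1 => q * u m1

noncomputable def K2f (u : V) : V
  | p1 => u p1
  | p2 => q^3 * u p2
  | p3 => (q⁻¹)^3 * u p3
  | z => u z
  | m3 => q^3 * u m3
  | m2 => (q⁻¹)^3 * u m2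
  | m1 => u m1

noncomputable def K2if (u : V) : V
  | p1 => u p1
  | p2 => (q⁻¹)^3 * u p2
  | p3 => q^3 * u p3
  | z => u z
  | m3 => (q⁻¹)^3 * u m3
  | m2 => q^3 * u m2
  | m1 => u m1

lemma piE1_eq (u : V) : piE1 u = E1f u := by
  funext a
  cases a <;>
    simp [piE1, E1f, Matrix.toLin'_apply, Matrix.mulVec, dotProduct, sum_idx,
      Emat, Matrix.single, zpow_neg, zpow_ofNat, inv_pow]

lemma piE2_eq (u : V) : piE2 u = E2f u := by
  funext a
  cases a <;>
    simp [piE2, E2f, Matrix.toLin'_apply, Matrix.mulVec, dotProduct, sum_idx,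
      Emat, Matrix.single, zpow_neg, zpow_ofNat, inv_pow]

lemma piF1_eq (u : V) : piF1 u = F1f u := by
  funext a
  cases a <;>
    simp [piF1, F1f, Matrix.toLin'_apply, Matrix.mulVec, dotProduct, sum_idx,
      Emat, Matrix.single, zpow_neg, zpow_ofNat, inv_pow]

lemma piF2_eq (u : V) : piF2 u = F2f u := by
  funext a
  cases a <;>
    simp [piF2, F2f, Matrix.toLin'_apply, Matrix.mulVec, dotProduct, sum_idx,
      Emat, Matrix.single, zpow_neg, zpow_ofNat, inv_pow]

lemma piK1_eq (u : V) : piK1 u = K1f u := by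
  funext a
  cases a <;>
    simp [piK1, K1f, Matrix.toLin'_apply, Matrix.mulVec, dotProduct, sum_idx,
      Emat, Matrix.single, zpow_neg, zpow_ofNat, inv_pow]

lemma piK1inv_eq (u : V) : piK1inv u = K1if u := by
  funext a
  cases a <;>
    simp [piK1inv, K1if, Matrix.toLin'_apply, Matrix.mulVec, dotProduct, sum_idx,
      Emat, Matrix.single, zpow_neg, zpow_ofNat, inv_pow]

lemma piK2_eq (u : V) : piK2 u = K2f u := by
  funext a
  cases a <;>
    simp [piK2, K2f, Matrix.toLin'_apply, Matrix.mulVec, dotProduct, sum_idx,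
      Emat, Matrix.single, zpow_neg, zpow_ofNat, inv_pow]

lemma piK2inv_eq (u : V) : piK2inv u = K2if u := by
  funext a
  cases a <;>
    simp [piK2inv, K2if, Matrix.toLin'_apply, Matrix.mulVec, dotProduct, sum_idx,
      Emat, Matrix.single, zpow_neg, zpow_ofNat, inv_pow]

/-- the bilinear form `( , )` on `V` is non-degenerate and
`U_q(G₂)`-invariant. -/
theorem bilinear_form_nondegenerate_and_invariant :
    (∀ u : V, (∀ w : V, B u w = 0) → u = 0) ∧
    (∀ u : V, (∀ w : V, B w u = 0) → u = 0) ∧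
    (∀ u w : V, B (piE1 u) (piK1 w) + B u (piE1 w) = 0) ∧
    (∀ u w : V, B (piE2 u) (piK2 w) + B u (piE2 w) = 0) ∧
    (∀ u w : V, B (piF1 u) w + B (piK1inv u) (piF1 w) = 0) ∧
    (∀ u w : V, B (piF2 u) w + B (piK2inv u) (piF2 w) = 0) ∧
    (∀ u w : V, B (piK1 u) (piK1 w) = B u w) ∧
    (∀ u w : V, B (piK2 u) (piK2 w) = B u w) := by
  refine ⟨?_, ?_, ?_, ?_, ?_, ?_, ?_, ?_⟩
  · intro u h
    funext a
    have h1 := h (v m1); have h2 := h (v m2); have h3 := h (v m3)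
    have h4 := h (v z); have h5 := h (v p1); have h6 := h (v p2)
    have h7 := h (v p3)
    rw [B_expand] at h1 h2 h3 h4 h5 h6 h7
    simp [v, Pi.single_apply] at h1 h2 h3 h4 h5 h6 h7
    cases a <;> simp_all [hq, pow_eq_zero_iff, inv_eq_zero]
  · intro u h
    funext a
    have h1 := h (v m1); have h2 := h (v m2); have h3 := h (v m3)
    have h4 := h (v z); have h5 := h (v p1); have h6 := h (v p2)
    have h7 := h (v p3)
    rw [B_expand] at h1 h2 h3 h4 h5 h6 h7
    simp [v, Pi.single_apply] at h1 h2 h3 h4 h5 h6 h7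
    cases a <;> simp_all [hq, pow_eq_zero_iff, inv_eq_zero]
  · intro u w
    simp only [B_expand, piE1_eq, piK1_eq, E1f, K1f]
    ring_nf
    field_simp [hq]
    ring
  · intro u w
    simp only [B_expand, piE2_eq, piK2_eq, E2f, K2f]
    ring_nf
    field_simp [hq]
    ring
  · intro u w
    simp only [B_expand, piF1_eq, piK1inv_eq, F1f, K1if]
    ring_nf
    field_simp [hq]
    ring
  · intro u w
    simp only [B_expand, piF2_eq, piK2inv_eq, F2f, K2if]
    ring_nf
    field_simp [hq]
    ring
  · intro u w
    simp only [B_expand, piK1_eq, K1f]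
    have h : q * q⁻¹ = 1 := mul_inv_cancel₀ hq
    linear_combination (q^6*u p1*w m1 + q^5*u p2*w m2 + q^2*(q*q⁻¹+1)*u p3*w m3
      + (q⁻¹)^4*u m1*w p1 + (q⁻¹)^3*u m2*w p2 + (q*q⁻¹+1)*u m3*w p3) * h
  · intro u w
    simp only [B_expand, piK2_eq, K2f]
    ring_nf
    field_simp [hq]
    ring

end
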